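/- Let n ≥ 2 be an integer and let k be a positive integer with k < n. Then it is not the case that every matrix A in the ring 𝕋ₙ(𝔽₂) of n×n upper triangular matrices over 𝔽₂ can be written as A = E + N with E an idempotent of 𝕋ₙ(𝔽₂) and N ∈ 𝕋ₙ(𝔽₂) satisfying Nᵏ = 0. In other words, the nil-clean index of 𝕋ₙ(𝔽₂) is exactly n. -/
import Mathlib

/-- The ring of n×n upper triangular matrices over 𝔽₂, as a subring of the full matrix ring. -/
def Triangular (n : ℕ) : Subring (Matrix (Fin n) (Fin n) (ZMod 2)) where
  carrier := {A | A.BlockTriangular id}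
  zero_mem' := Matrix.blockTriangular_zero
  one_mem' := Matrix.blockTriangular_one
  add_mem' := fun ha hb => ha.add hb
  neg_mem' := fun ha => ha.neg
  mul_mem' := fun ha hb => ha.mul hb

section Aux

variable {n : ℕ}

/-- diagonal entry of product of two triangular matrices -/
lemma diag_mul_tri (M N : Matrix (Fin n) (Fin n) (ZMod 2))
    (hM : M.BlockTriangular id) (hN : N.BlockTriangular id) (i : Fin n) :
    (M * N) i i = M i i * N i i := by
  rw [Matrix.mul_apply]
  refine Finset.sum_eq_single i (fun l _ hl => ?_) (by simp)
  rcases lt_or_gt_of_ne hl with h | h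
  · rw [hM (show (id l : Fin n) < id i from h), zero_mul]
  · rw [hN (show (id i : Fin n) < id l from h), mul_zero]

lemma tri_pow (M : Matrix (Fin n) (Fin n) (ZMod 2)) (hM : M.BlockTriangular id) (m : ℕ) :
    (M ^ m).BlockTriangular id := by
  induction m with
  | zero => simpa using Matrix.blockTriangular_one
  | succ m ih => rw [pow_succ]; exact ih.mul hM

lemma diag_pow_tri (M : Matrix (Fin n) (Fin n) (ZMod 2)) (hM : M.BlockTriangular id)
    (m : ℕ) (i : Fin n) : (M ^ m) i i = (M i i) ^ m := by
  induction m with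
  | zero => simp [Matrix.one_apply]
  | succ m ih => rw [pow_succ, pow_succ, diag_mul_tri _ _ (tri_pow M hM m) hM, ih]

/-- strictly triangular matrices: entries of powers vanish. -/
lemma strict_pow_entry (M : Matrix (Fin n) (Fin n) (ZMod 2))
    (hM : ∀ i j : Fin n, (j : ℕ) ≤ (i : ℕ) → M i j = 0) :
    ∀ m (i j : Fin n), (j : ℕ) < (i : ℕ) + m → (M ^ m) i j = 0 := by
  intro m
  induction m with
  | zero =>
    intro i j hij
    have : i ≠ j := by intro h; subst h; omega
    simp [Matrix.one_apply, this]
  | succ m ih =>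
    intro i j hij
    rw [pow_succ', Matrix.mul_apply]
    refine Finset.sum_eq_zero fun l _ => ?_
    rcases le_or_gt (l : ℕ) (i : ℕ) with h | h
    · rw [hM i l h, zero_mul]
    · rw [ih l j (by omega), mul_zero]

lemma strict_pow_n (M : Matrix (Fin n) (Fin n) (ZMod 2))
    (hM : ∀ i j : Fin n, (j : ℕ) ≤ (i : ℕ) → M i j = 0) : M ^ n = 0 := by
  ext i j
  rw [strict_pow_entry M hM n i j (by omega)]
  rfl

/-- the nilpotent Jordan block -/
def J (n : ℕ) : Matrix (Fin n) (Fin n) (ZMod 2) :=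
  Matrix.of fun i j => if (i : ℕ) + 1 = (j : ℕ) then 1 else 0

lemma J_tri : (J n).BlockTriangular id := by
  intro i j hij
  simp only [id] at hij
  simp only [J, Matrix.of_apply, ite_eq_right_iff]
  intro h; omega

lemma J_pow (m : ℕ) (i j : Fin n) :
    ((J n) ^ m) i j = if (i : ℕ) + m = (j : ℕ) then 1 else 0 := by
  induction m generalizing j with
  | zero => simp [Matrix.one_apply, Fin.ext_iff, eq_comm]
  | succ m ih =>
    rw [pow_succ, Matrix.mul_apply]
    have key : ∀ l : Fin n, ((J n) ^ m) i l * (J n) l j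
        = if ((i : ℕ) + m = (l : ℕ) ∧ (l : ℕ) + 1 = (j : ℕ)) then 1 else 0 := by
      intro l
      rw [ih]
      simp only [J, Matrix.of_apply]
      split_ifs with h1 h2 h3 h4 <;> simp_all <;> omega
    simp only [key]
    by_cases h : (i : ℕ) + (m + 1) = (j : ℕ)
    · have hl : (i : ℕ) + m < n := by omega
      rw [Finset.sum_eq_single (⟨(i : ℕ) + m, hl⟩ : Fin n)]
      · simp only [if_pos h]
        rw [if_pos]
        refine ⟨by trivial, ?_⟩
        show (i : ℕ) + m + 1 = (j : ℕ)
        omega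
      · intro l _ hne
        rw [if_neg]
        rintro ⟨h1, h2⟩
        exact hne (Fin.ext h1.symm)
      · simp
    · rw [if_neg h, Finset.sum_eq_zero]
      intro l _
      rw [if_neg]
      rintro ⟨h1, h2⟩
      omega

end Aux

theorem Tn_F2_nil_clean_index_eq (n k : ℕ) (hn : 2 ≤ n) (hk : 0 < k) (hkn : k < n) :
    (¬ ∀ A : Triangular n, ∃ E N : Triangular n,
        E * E = E ∧ N ^ k = 0 ∧ A = E + N) ∧
    (∀ A : Triangular n, ∃ E N : Triangular n,
        E * E = E ∧ N ^ n = 0 ∧ A = E + N) := by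
  constructor
  · intro H
    obtain ⟨E, N, hE, hN, hA⟩ := H ⟨J n, J_tri⟩
    -- pass to matrix level
    have hEm : (E : Matrix (Fin n) (Fin n) (ZMod 2)) * E = E := by
      exact_mod_cast congrArg Subtype.val hE
    have hNm : (N : Matrix (Fin n) (Fin n) (ZMod 2)) ^ k = 0 := by
      exact_mod_cast congrArg Subtype.val hN
    have hAm : J n = (E : Matrix (Fin n) (Fin n) (ZMod 2)) + N := by
      have := congrArg Subtype.val hA
      simpa using this
    have hEt : (E : Matrix (Fin n) (Fin n) (ZMod 2)).BlockTriangular id := E.2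
    have hNt : (N : Matrix (Fin n) (Fin n) (ZMod 2)).BlockTriangular id := N.2
    -- diagonal of N is zero
    have hNd : ∀ i : Fin n, (N : Matrix (Fin n) (Fin n) (ZMod 2)) i i = 0 := by
      intro i
      have := diag_pow_tri _ hNt k i
      rw [hNm] at this
      have h0 : ((N : Matrix (Fin n) (Fin n) (ZMod 2)) i i) ^ k = 0 := by
        rw [← this]; rfl
      exact pow_eq_zero_iff hk.ne' |>.mp h0
    -- diagonal of E is zero
    have hEd : ∀ i : Fin n, (E : Matrix (Fin n) (Fin n) (ZMod 2)) i i = 0 := by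
      intro i
      have := congrFun (congrFun hAm i) i
      simp only [Matrix.add_apply, hNd i, add_zero] at this
      rw [← this]
      simp only [J, Matrix.of_apply, ite_eq_right_iff]
      intro h; omega
    -- E is strictly triangular hence nilpotent, and idempotent, so E = 0
    have hEstrict : ∀ i j : Fin n, (j : ℕ) ≤ (i : ℕ) →
        (E : Matrix (Fin n) (Fin n) (ZMod 2)) i j = 0 := by
      intro i j hij
      rcases eq_or_lt_of_le hij with h | h
      · have : i = j := Fin.ext h.symm
        subst this; exact hEd i
      · exact hEt (show (id j : Fin n) < id i from h)
    have hEn : (E : Matrix (Fin n) (Fin n) (ZMod 2)) ^ n = 0 := strict_pow_n _ hEstrict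
    have hEpow : ∀ m : ℕ, 0 < m → (E : Matrix (Fin n) (Fin n) (ZMod 2)) ^ m = E := by
      intro m hm
      induction m with
      | zero => omega
      | succ m ih =>
        rcases Nat.eq_zero_or_pos m with h | h
        · subst h; simp
        · rw [pow_succ, ih h, hEm]
    have hE0 : (E : Matrix (Fin n) (Fin n) (ZMod 2)) = 0 := by
      rw [← hEpow n (by omega), hEn]
    -- so N = J n and J n ^ k = 0, contradiction
    have hNJ : (N : Matrix (Fin n) (Fin n) (ZMod 2)) = J n := by
      rw [hAm, hE0, zero_add]
    rw [hNJ] at hNm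
    have := congrFun (congrFun hNm ⟨0, by omega⟩) ⟨k, hkn⟩
    rw [J_pow] at this
    simp at this
  · intro A
    set d : Fin n → ZMod 2 := fun i => (A : Matrix (Fin n) (Fin n) (ZMod 2)) i i with hd
    have hdE : (Matrix.diagonal d).BlockTriangular (id : Fin n → Fin n) :=
      Matrix.blockTriangular_diagonal d
    refine ⟨⟨Matrix.diagonal d, hdE⟩, A - ⟨Matrix.diagonal d, hdE⟩, ?_, ?_, by abel⟩
    · apply Subtype.ext
      show Matrix.diagonal d * Matrix.diagonal d = Matrix.diagonal d
      have h2 : ∀ x : ZMod 2, x * x = x := by decide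
      rw [Matrix.diagonal_mul_diagonal]
      simp only [h2]
    · apply Subtype.ext
      show ((A : Matrix (Fin n) (Fin n) (ZMod 2)) - Matrix.diagonal d) ^ n = 0
      apply strict_pow_n
      intro i j hij
      rcases eq_or_lt_of_le hij with h | h
      · have : i = j := Fin.ext h.symm
        subst this
        simp [Matrix.sub_apply, hd]
      · have hlt : (j : Fin n) < i := h
        have hne : i ≠ j := by intro hc; subst hc; omega
        rw [Matrix.sub_apply, A.2 (show (id j : Fin n) < id i from hlt),
          Matrix.diagonal_apply_ne d hne, sub_zero]
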